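/- arXiv:1701.07995 — 2 statements merged into one kernel-verified Lean document; each statement's English description precedes it below -/
import Mathlib

section
/- In the weak order on partial orders on [n], the posets covering a given poset R are exactly: (1) R \ {(a,b)} for a < b with a R b such that there is no i with a R i R b and i ∉ {a,b}, and (2) R ∪ {(b,a)} for a < b with a, b incomparable in R, such that there is no i ≠ a with a R i but not b R i, and no j ≠ b with j R b but not j R a. -/
/-- Increasing part of an integer binary relation. -/
def IncR {n : ℕ} (R : Set (Fin n × Fin n)) : Set (Fin n × Fin n) := {p | p ∈ R ∧ p.1 ≤ p.2}

/-- Decreasing part of an integer binary relation. -/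
def DecR {n : ℕ} (R : Set (Fin n × Fin n)) : Set (Fin n × Fin n) := {p | p ∈ R ∧ p.2 ≤ p.1}

/-- Reflexivity of a relation on `Fin n`. -/
def IsReflRel {n : ℕ} (R : Set (Fin n × Fin n)) : Prop := ∀ a : Fin n, (a, a) ∈ R

/-- Transitivity. -/
def IsTransRel {n : ℕ} (R : Set (Fin n × Fin n)) : Prop :=
  ∀ u v w : Fin n, (u, v) ∈ R → (v, w) ∈ R → (u, w) ∈ R

/-- Antisymmetry. -/
def IsAntisymRel {n : ℕ} (R : Set (Fin n × Fin n)) : Prop :=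
  ∀ u v : Fin n, (u, v) ∈ R → (v, u) ∈ R → u = v

/-- The weak order on integer binary relations. -/
def WOLE {n : ℕ} (R S : Set (Fin n × Fin n)) : Prop := IncR S ⊆ IncR R ∧ DecR R ⊆ DecR S

/-- A poset on [n] is a reflexive transitive antisymmetric relation. -/
def IsPosetRel {n : ℕ} (R : Set (Fin n × Fin n)) : Prop :=
  IsReflRel R ∧ IsTransRel R ∧ IsAntisymRel R

/-- Cover relations of the weak order restricted to posets. -/
def CoversPos {n : ℕ} (R S : Set (Fin n × Fin n)) : Prop :=
  WOLE R S ∧ R ≠ S ∧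
    ∀ T : Set (Fin n × Fin n), IsPosetRel T → WOLE R T → WOLE T S → T = R ∨ T = S

section AuxCov

variable {n : ℕ}

lemma mem_IncR {R : Set (Fin n × Fin n)} {p : Fin n × Fin n} :
    p ∈ IncR R ↔ p ∈ R ∧ p.1 ≤ p.2 := Iff.rfl

lemma mem_DecR {R : Set (Fin n × Fin n)} {p : Fin n × Fin n} :
    p ∈ DecR R ↔ p ∈ R ∧ p.2 ≤ p.1 := Iff.rfl

/-- A relation is determined by its increasing and decreasing parts. -/
lemma eq_of_inc_dec {T T' : Set (Fin n × Fin n)}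
    (h1 : IncR T = IncR T') (h2 : DecR T = DecR T') : T = T' := by
  ext ⟨u, v⟩
  rcases le_total u v with h | h
  · constructor
    · intro hm
      exact ((Set.ext_iff.mp h1 (u, v)).mp ⟨hm, h⟩).1
    · intro hm
      exact ((Set.ext_iff.mp h1 (u, v)).mpr ⟨hm, h⟩).1
  · constructor
    · intro hm
      exact ((Set.ext_iff.mp h2 (u, v)).mp ⟨hm, h⟩).1
    · intro hm
      exact ((Set.ext_iff.mp h2 (u, v)).mpr ⟨hm, h⟩).1

lemma subset_of_inc_eq {R S : Set (Fin n × Fin n)} (hle : WOLE R S)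
    (hinc : IncR R = IncR S) : R ⊆ S := by
  intro p hp
  rcases le_total p.1 p.2 with h | h
  · exact ((Set.ext_iff.mp hinc p).mp ⟨hp, h⟩).1
  · exact (hle.2 ⟨hp, h⟩).1

/-- Descent lemma for the "deletion" case: from any increasing pair in `R` but not in `S`
we can find one with no intermediate element. -/
lemma exists_cover_pair {R S : Set (Fin n × Fin n)}
    (hR : IsPosetRel R) (hS : IsPosetRel S) (hle : WOLE R S) :
    ∀ N : ℕ, ∀ a b : Fin n, a < b → (a, b) ∈ R → (a, b) ∉ S →
      Set.ncard {i | (a, i) ∈ R ∧ (i, b) ∈ R} < N →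
      ∃ a' b' : Fin n, a' < b' ∧ (a', b') ∈ R ∧ (a', b') ∉ S ∧
        ∀ i, (a', i) ∈ R → (i, b') ∈ R → i = a' ∨ i = b' := by
  intro N
  induction N with
  | zero => intro a b _ _ _ h; omega
  | succ N ih =>
    intro a b hab habR habS hcard
    by_cases hcov : ∀ i, (a, i) ∈ R → (i, b) ∈ R → i = a ∨ i = b
    · exact ⟨a, b, hab, habR, habS, hcov⟩
    push_neg at hcov
    obtain ⟨i, hai, hib, hia, hibne⟩ := hcov
    have hnot : (a, i) ∉ S ∨ (i, b) ∉ S := by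
      by_contra hc
      push_neg at hc
      exact habS (hS.2.1 a i b hc.1 hc.2)
    rcases hnot with hS1 | hS2
    · have hai_lt : a < i := by
        rcases lt_trichotomy a i with h | h | h
        · exact h
        · exact absurd h.symm hia
        · exact absurd (hle.2 ⟨hai, le_of_lt h⟩).1 hS1
      refine ih a i hai_lt hai hS1 ?_
      have hss : {k | (a, k) ∈ R ∧ (k, i) ∈ R} ⊂ {k | (a, k) ∈ R ∧ (k, b) ∈ R} := by
        rw [Set.ssubset_iff_of_subset]
        · refine ⟨b, ⟨habR, hR.1 b⟩, ?_⟩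
          intro hb
          exact hibne (hR.2.2 i b hib hb.2)
        · intro k hk
          exact ⟨hk.1, hR.2.1 k i b hk.2 hib⟩
      have h1 := Set.ncard_lt_ncard hss (Set.toFinite _)
      omega
    · have hib_lt : i < b := by
        rcases lt_trichotomy i b with h | h | h
        · exact h
        · exact absurd h hibne
        · exact absurd (hle.2 ⟨hib, le_of_lt h⟩).1 hS2
      refine ih i b hib_lt hib hS2 ?_
      have hss : {k | (i, k) ∈ R ∧ (k, b) ∈ R} ⊂ {k | (a, k) ∈ R ∧ (k, b) ∈ R} := by
        rw [Set.ssubset_iff_of_subset]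
        · refine ⟨a, ⟨hR.1 a, habR⟩, ?_⟩
          intro ha
          exact hia (hR.2.2 i a ha.1 hai)
        · intro k hk
          exact ⟨hR.2.1 a i k hai hk.1, hk.2⟩
      have h1 := Set.ncard_lt_ncard hss (Set.toFinite _)
      omega

/-- Descent lemma for the "addition" case. -/
lemma exists_add_pair {R S : Set (Fin n × Fin n)}
    (hR : IsPosetRel R) (hS : IsPosetRel S) (hle : WOLE R S)
    (hinc : IncR R = IncR S) :
    ∀ N : ℕ, ∀ a b : Fin n, a < b → (b, a) ∈ S → (b, a) ∉ R →
      Set.ncard {i | (a, i) ∈ R ∧ (b, i) ∉ R} + Set.ncard {j | (j, b) ∈ R ∧ (j, a) ∉ R} < N →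
      ∃ a' b' : Fin n, a' < b' ∧ (b', a') ∈ S ∧ (b', a') ∉ R ∧
        (∀ i, i ≠ a' → (a', i) ∈ R → (b', i) ∈ R) ∧
        (∀ j, j ≠ b' → (j, b') ∈ R → (j, a') ∈ R) := by
  have hsub : R ⊆ S := subset_of_inc_eq hle hinc
  intro N
  induction N with
  | zero => intro a b _ _ _ h; omega
  | succ N ih =>
    intro a b hab hbaS hbaR hcard
    by_cases hc1 : ∀ i, i ≠ a → (a, i) ∈ R → (b, i) ∈ R
    · by_cases hc2 : ∀ j, j ≠ b → (j, b) ∈ R → (j, a) ∈ R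
      · exact ⟨a, b, hab, hbaS, hbaR, hc1, hc2⟩
      push_neg at hc2
      obtain ⟨j, hjb, hjbR, hjaR⟩ := hc2
      have hjaS : (j, a) ∈ S := hS.2.1 j b a (hsub hjbR) hbaS
      have haj : a < j := by
        rcases le_or_gt j a with h | h
        · exact absurd ((Set.ext_iff.mp hinc (j, a)).mpr ⟨hjaS, h⟩).1 hjaR
        · exact h
      refine ih a j haj hjaS hjaR ?_
      have hss1 : {i | (a, i) ∈ R ∧ (j, i) ∉ R} ⊆ {i | (a, i) ∈ R ∧ (b, i) ∉ R} := by
        intro i hi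
        exact ⟨hi.1, fun hbi => hi.2 (hR.2.1 j b i hjbR hbi)⟩
      have hss2 : {k | (k, j) ∈ R ∧ (k, a) ∉ R} ⊂ {k | (k, b) ∈ R ∧ (k, a) ∉ R} := by
        rw [Set.ssubset_iff_of_subset]
        · refine ⟨b, ⟨hR.1 b, hbaR⟩, ?_⟩
          intro hb
          exact hjb (hR.2.2 j b hjbR hb.1)
        · intro k hk
          exact ⟨hR.2.1 k j b hk.1 hjbR, hk.2⟩
      have h1 := Set.ncard_le_ncard hss1 (Set.toFinite _)
      have h2 := Set.ncard_lt_ncard hss2 (Set.toFinite _)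
      omega
    · push_neg at hc1
      obtain ⟨i, hia, haiR, hbiR⟩ := hc1
      have hbiS : (b, i) ∈ S := hS.2.1 b a i hbaS (hsub haiR)
      have hib : i < b := by
        rcases le_or_gt b i with h | h
        · exact absurd ((Set.ext_iff.mp hinc (b, i)).mpr ⟨hbiS, h⟩).1 hbiR
        · exact h
      refine ih i b hib hbiS hbiR ?_
      have hss1 : {k | (i, k) ∈ R ∧ (b, k) ∉ R} ⊂ {k | (a, k) ∈ R ∧ (b, k) ∉ R} := by
        rw [Set.ssubset_iff_of_subset]
        · refine ⟨a, ⟨hR.1 a, hbaR⟩, ?_⟩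
          intro ha
          exact hia (hR.2.2 i a ha.1 haiR)
        · intro k hk
          exact ⟨hR.2.1 a i k haiR hk.1, hk.2⟩
      have hss2 : {j | (j, b) ∈ R ∧ (j, i) ∉ R} ⊆ {j | (j, b) ∈ R ∧ (j, a) ∉ R} := by
        intro j hj
        exact ⟨hj.1, fun hja => hj.2 (hR.2.1 j a i hja haiR)⟩
      have h1 := Set.ncard_lt_ncard hss1 (Set.toFinite _)
      have h2 := Set.ncard_le_ncard hss2 (Set.toFinite _)
      omega

end AuxCov

/-- Characterization of the cover relations in the weak order on posets. -/
theorem covers_posets_characterization (n : ℕ) (R S : Set (Fin n × Fin n))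
    (hR : IsPosetRel R) (hS : IsPosetRel S) :
    CoversPos R S ↔
      ((∃ a b : Fin n, a < b ∧ (a, b) ∈ R ∧
          (∀ i : Fin n, (a, i) ∈ R → (i, b) ∈ R → i = a ∨ i = b) ∧
          S = R \ {(a, b)}) ∨
       (∃ a b : Fin n, a < b ∧ (a, b) ∉ R ∧ (b, a) ∉ R ∧
          (∀ i : Fin n, i ≠ a → (a, i) ∈ R → (b, i) ∈ R) ∧
          (∀ j : Fin n, j ≠ b → (j, b) ∈ R → (j, a) ∈ R) ∧
          S = R ∪ {(b, a)})) := by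
  constructor
  · -- forward direction
    rintro ⟨hle, hne, hmin⟩
    by_cases hA : ∃ p ∈ IncR R, p ∉ IncR S
    · left
      obtain ⟨⟨a, b⟩, ⟨habR, hple⟩, hpS⟩ := hA
      have hab : a < b := by
        rcases lt_or_eq_of_le hple with h | h
        · exact h
        · exfalso
          have h' : a = b := h
          subst h'
          exact hpS ⟨hS.1 a, le_refl a⟩
      have habS : (a, b) ∉ S := fun h => hpS ⟨h, hple⟩
      obtain ⟨a', b', hab', habR', habS', hcov'⟩ :=
        exists_cover_pair hR hS hle
          (Set.ncard {i | (a, i) ∈ R ∧ (i, b) ∈ R} + 1) a b hab habR habS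
          (Nat.lt_succ_self _)
      set T : Set (Fin n × Fin n) := R \ {(a', b')} with hTdef
      have hTposet : IsPosetRel T := by
        refine ⟨?_, ?_, ?_⟩
        · intro x
          refine ⟨hR.1 x, ?_⟩
          intro hmem
          rw [Set.mem_singleton_iff, Prod.mk.injEq] at hmem
          exact absurd (hmem.1.symm.trans hmem.2) (ne_of_lt hab')
        · intro u v w huv hvw
          refine ⟨hR.2.1 u v w huv.1 hvw.1, ?_⟩
          intro hmem
          rw [Set.mem_singleton_iff, Prod.mk.injEq] at hmem
          obtain ⟨rfl, rfl⟩ := hmem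
          rcases hcov' v huv.1 hvw.1 with rfl | rfl
          · exact hvw.2 rfl
          · exact huv.2 rfl
        · intro u v huv hvu
          exact hR.2.2 u v huv.1 hvu.1
      have hWRT : WOLE R T := by
        constructor
        · intro p hp
          exact ⟨hp.1.1, hp.2⟩
        · intro p hp
          refine ⟨⟨hp.1, ?_⟩, hp.2⟩
          intro hmem
          rw [Set.mem_singleton_iff] at hmem
          subst hmem
          exact absurd hab' (not_lt_of_ge hp.2)
      have hWTS : WOLE T S := by
        constructor
        · intro p hp
          have hpR : p ∈ IncR R := hle.1 hp
          refine ⟨⟨hpR.1, ?_⟩, hpR.2⟩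
          intro hmem
          rw [Set.mem_singleton_iff] at hmem
          subst hmem
          exact habS' hp.1
        · intro p hp
          exact hle.2 ⟨hp.1.1, hp.2⟩
      rcases hmin T hTposet hWRT hWTS with hTR | hTS
      · exfalso
        have : (a', b') ∈ T := hTR.symm ▸ habR'
        exact this.2 rfl
      · exact ⟨a', b', hab', habR', hcov', hTS.symm⟩
    · right
      push_neg at hA
      have hinc : IncR R = IncR S := Set.Subset.antisymm hA hle.1
      have hsub : R ⊆ S := subset_of_inc_eq hle hinc
      have hdne : DecR R ≠ DecR S := by
        intro h
        exact hne (eq_of_inc_dec hinc h)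
      obtain ⟨⟨b, a⟩, hpS, hpR⟩ := Set.exists_of_ssubset (hle.2.ssubset_of_ne hdne)
      have haleb : a ≤ b := hpS.2
      have hbaS : (b, a) ∈ S := hpS.1
      have hbaR : (b, a) ∉ R := fun h => hpR ⟨h, haleb⟩
      have hab : a < b := by
        rcases lt_or_eq_of_le haleb with h | h
        · exact h
        · exact absurd (hR.1 b) (h ▸ hbaR)
      obtain ⟨a', b', hab', hbaS', hbaR', hc1, hc2⟩ :=
        exists_add_pair hR hS hle hinc
          (Set.ncard {i | (a, i) ∈ R ∧ (b, i) ∉ R} +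
            Set.ncard {j | (j, b) ∈ R ∧ (j, a) ∉ R} + 1) a b hab hbaS hbaR
          (Nat.lt_succ_self _)
      have habR' : (a', b') ∉ R := by
        intro h
        exact (ne_of_lt hab') (hS.2.2 a' b' (hsub h) hbaS')
      set T : Set (Fin n × Fin n) := R ∪ {(b', a')} with hTdef
      have hmemT : ∀ p : Fin n × Fin n, p ∈ T ↔ p ∈ R ∨ p = (b', a') := by
        intro p
        simp only [hTdef, Set.mem_union, Set.mem_singleton_iff]
      have hTposet : IsPosetRel T := by
        refine ⟨?_, ?_, ?_⟩
        · intro x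
          exact Or.inl (hR.1 x)
        · intro u v w huv hvw
          rcases (hmemT (u, v)).mp huv with h1 | h1
          · rcases (hmemT (v, w)).mp hvw with h2 | h2
            · exact (hmemT (u, w)).mpr (Or.inl (hR.2.1 u v w h1 h2))
            · rw [Prod.mk.injEq] at h2
              by_cases huw : u = v
              · refine (hmemT (u, w)).mpr (Or.inr ?_)
                rw [Prod.mk.injEq]
                exact ⟨huw.trans h2.1, h2.2⟩
              · refine (hmemT (u, w)).mpr (Or.inl ?_)
                rw [h2.2]
                apply hc2 u (fun h => huw (h.trans h2.1.symm))
                rw [← h2.1]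
                exact h1
          · rw [Prod.mk.injEq] at h1
            rcases (hmemT (v, w)).mp hvw with h2 | h2
            · by_cases hwv : w = v
              · refine (hmemT (u, w)).mpr (Or.inr ?_)
                rw [Prod.mk.injEq]
                exact ⟨h1.1, hwv.trans h1.2⟩
              · refine (hmemT (u, w)).mpr (Or.inl ?_)
                rw [h1.1]
                apply hc1 w (fun h => hwv (h.trans h1.2.symm))
                rw [← h1.2]
                exact h2
            · rw [Prod.mk.injEq] at h2
              refine (hmemT (u, w)).mpr (Or.inr ?_)
              rw [Prod.mk.injEq]
              exact ⟨h1.1, h2.2⟩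
        · intro u v huv hvu
          rcases (hmemT (u, v)).mp huv with h1 | h1
          · rcases (hmemT (v, u)).mp hvu with h2 | h2
            · exact hR.2.2 u v h1 h2
            · rw [Prod.mk.injEq] at h2
              exfalso
              apply habR'
              rw [← h2.2, ← h2.1]
              exact h1
          · rw [Prod.mk.injEq] at h1
            rcases (hmemT (v, u)).mp hvu with h2 | h2
            · exfalso
              apply habR'
              rw [← h1.1, ← h1.2]
              exact h2
            · rw [Prod.mk.injEq] at h2
              rw [h1.1, h2.1]
      have hWRT : WOLE R T := by
        constructor
        · intro p hp
          rcases (hmemT p).mp hp.1 with h1 | h1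
          · exact ⟨h1, hp.2⟩
          · subst h1
            exact absurd hab' (not_lt_of_ge hp.2)
        · intro p hp
          exact ⟨(hmemT p).mpr (Or.inl hp.1), hp.2⟩
      have hWTS : WOLE T S := by
        constructor
        · intro p hp
          have hpR : p ∈ IncR R := (Set.ext_iff.mp hinc p).mpr hp
          exact ⟨(hmemT p).mpr (Or.inl hpR.1), hpR.2⟩
        · intro p hp
          rcases (hmemT p).mp hp.1 with h1 | h1
          · exact hle.2 ⟨h1, hp.2⟩
          · subst h1
            exact ⟨hbaS', hp.2⟩
      rcases hmin T hTposet hWRT hWTS with hTR | hTS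
      · exfalso
        have : (b', a') ∈ R := hTR ▸ (hmemT (b', a')).mpr (Or.inr rfl)
        exact hbaR' this
      · exact ⟨a', b', hab', habR', hbaR', hc1, hc2, hTS.symm⟩
  · -- backward direction
    rintro (⟨a, b, hab, habR, _hcov, rfl⟩ | ⟨a, b, hab, habR, hbaR, _hc1, _hc2, rfl⟩)
    · -- deletion case
      have hIncS : IncR (R \ {(a, b)}) = {p : Fin n × Fin n | p ∈ IncR R ∧ p ≠ (a, b)} := by
        ext p
        constructor
        · intro hp
          exact ⟨⟨hp.1.1, hp.2⟩, hp.1.2⟩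
        · intro hp
          exact ⟨⟨hp.1.1, hp.2⟩, hp.1.2⟩
      have hDecS : DecR (R \ {(a, b)}) = DecR R := by
        ext p
        constructor
        · intro hp
          exact ⟨hp.1.1, hp.2⟩
        · intro hp
          refine ⟨⟨hp.1, ?_⟩, hp.2⟩
          intro hmem
          rw [Set.mem_singleton_iff] at hmem
          subst hmem
          exact absurd hab (not_lt_of_ge hp.2)
      refine ⟨⟨?_, ?_⟩, ?_, ?_⟩
      · intro p hp
        exact ⟨hp.1.1, hp.2⟩
      · intro p hp
        exact (Set.ext_iff.mp hDecS p).mpr hp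
      · intro h
        have : (a, b) ∈ R \ {(a, b)} := h ▸ habR
        exact this.2 rfl
      · intro T _hT hRT hTS
        by_cases hmem : (a, b) ∈ T
        · left
          apply eq_of_inc_dec
          · apply Set.Subset.antisymm hRT.1
            intro p hp
            by_cases hpe : p = (a, b)
            · subst hpe
              exact ⟨hmem, le_of_lt hab⟩
            · exact hTS.1 ((Set.ext_iff.mp hIncS p).mpr ⟨hp, hpe⟩)
          · apply Set.Subset.antisymm
            · intro p hp
              exact (Set.ext_iff.mp hDecS p).mp (hTS.2 hp)
            · exact hRT.2
        · right
          apply eq_of_inc_dec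
          · apply Set.Subset.antisymm
            · intro p hp
              have hpR : p ∈ IncR R := hRT.1 hp
              have hpne : p ≠ (a, b) := by
                intro h
                exact hmem (h ▸ hp.1)
              exact (Set.ext_iff.mp hIncS p).mpr ⟨hpR, hpne⟩
            · exact hTS.1
          · apply Set.Subset.antisymm hTS.2
            intro p hp
            exact hRT.2 ((Set.ext_iff.mp hDecS p).mp hp)
    · -- addition case
      have hIncS : IncR (R ∪ {(b, a)}) = IncR R := by
        ext p
        constructor
        · intro hp
          rcases hp.1 with h1 | h1
          · exact ⟨h1, hp.2⟩
          · rw [Set.mem_singleton_iff] at h1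
            subst h1
            exact absurd hab (not_lt_of_ge hp.2)
        · intro hp
          exact ⟨Or.inl hp.1, hp.2⟩
      have hDecS : DecR (R ∪ {(b, a)}) = DecR R ∪ {(b, a)} := by
        ext p
        constructor
        · intro hp
          rcases hp.1 with h1 | h1
          · exact Or.inl ⟨h1, hp.2⟩
          · exact Or.inr h1
        · intro hp
          rcases hp with h1 | h1
          · exact ⟨Or.inl h1.1, h1.2⟩
          · rw [Set.mem_singleton_iff] at h1
            subst h1
            exact ⟨Or.inr rfl, le_of_lt hab⟩
      refine ⟨⟨?_, ?_⟩, ?_, ?_⟩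
      · intro p hp
        exact (Set.ext_iff.mp hIncS p).mp hp
      · intro p hp
        exact ⟨Or.inl hp.1, hp.2⟩
      · intro h
        exact hbaR (h ▸ (Or.inr rfl : (b, a) ∈ R ∪ {(b, a)}))
      · intro T _hT hRT hTS
        by_cases hmem : (b, a) ∈ T
        · right
          apply eq_of_inc_dec
          · apply Set.Subset.antisymm
            · intro p hp
              exact (Set.ext_iff.mp hIncS p).mpr (hRT.1 hp)
            · exact hTS.1
          · apply Set.Subset.antisymm hTS.2
            intro p hp
            rcases (Set.ext_iff.mp hDecS p).mp hp with h1 | h1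
            · exact hRT.2 h1
            · rw [Set.mem_singleton_iff] at h1
              subst h1
              exact ⟨hmem, le_of_lt hab⟩
        · left
          apply eq_of_inc_dec
          · apply Set.Subset.antisymm hRT.1
            intro p hp
            exact hTS.1 ((Set.ext_iff.mp hIncS p).mpr hp)
          · apply Set.Subset.antisymm
            · intro p hp
              rcases (Set.ext_iff.mp hDecS p).mp (hTS.2 hp) with h1 | h1
              · exact h1
              · rw [Set.mem_singleton_iff] at h1
                exfalso
                exact hmem (h1 ▸ hp.1)
            · exact hRT.2
end

section
/- The subposet of the weak order on partial orders on [n] induced by IWOIP(n) is a lattice, in which the meet of ≺ and ≺' equals their meet in the lattice of all posets, and the join equals IWOIPid applied to their join in the lattice of all posets. -/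
/-- Transitive closure of a relation. -/
def tcR {n : ℕ} (R : Set (Fin n × Fin n)) : Set (Fin n × Fin n) :=
  {p | Relation.TransGen (fun u v : Fin n => (u, v) ∈ R) p.1 p.2}

/-- The transitive decreasing deletion. -/
def tddR {n : ℕ} (R : Set (Fin n × Fin n)) : Set (Fin n × Fin n) :=
  R \ {p | p.2 ≤ p.1 ∧ ∃ i j : Fin n, i ≤ p.1 ∧ p.2 ≤ j ∧
    (i, p.1) ∈ R ∧ (p.1, p.2) ∈ R ∧ (p.2, j) ∈ R ∧ (i, j) ∉ R}

/-- The transitive increasing deletion. -/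
def tidR {n : ℕ} (R : Set (Fin n × Fin n)) : Set (Fin n × Fin n) :=
  R \ {p | p.1 ≤ p.2 ∧ ∃ i j : Fin n, p.1 ≤ i ∧ j ≤ p.2 ∧
    (i, p.1) ∈ R ∧ (p.1, p.2) ∈ R ∧ (p.2, j) ∈ R ∧ (i, j) ∉ R}

/-- Meet in the weak order on transitive relations. -/
def meetT {n : ℕ} (R S : Set (Fin n × Fin n)) : Set (Fin n × Fin n) :=
  tddR (tcR (IncR R ∪ IncR S) ∪ (DecR R ∩ DecR S))

/-- Join in the weak order on transitive relations. -/
def joinT {n : ℕ} (R S : Set (Fin n × Fin n)) : Set (Fin n × Fin n) :=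
  tidR ((IncR R ∩ IncR S) ∪ tcR (DecR R ∪ DecR S))

/-- The step relation for deletion chains: u < v and u, v not related in R. -/
def NRel {n : ℕ} (R : Set (Fin n × Fin n)) (u v : Fin n) : Prop :=
  u < v ∧ (u, v) ∉ R

/-- The IWOIP increasing deletion: delete all (a,c) admitting an intermediate
chain a < b₁ < ... < b_k < c with a ⊀ b₁ ⊀ ... ⊀ b_k ⊀ c. -/
def IWOIPid {n : ℕ} (R : Set (Fin n × Fin n)) : Set (Fin n × Fin n) :=
  R \ {p | ∃ b : Fin n, NRel R p.1 b ∧ Relation.TransGen (NRel R) b p.2}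

/-- Membership in IWOIP(n). -/
def MemIWOIP {n : ℕ} (S : Set (Fin n × Fin n)) : Prop :=
  IsReflRel S ∧ IsTransRel S ∧ IsAntisymRel S ∧
    ∀ a b c : Fin n, a < b → b < c → (a, c) ∈ S → (a, b) ∈ S ∨ (b, c) ∈ S

set_option linter.unusedSectionVars false

section Aux
variable {n : ℕ}

lemma mem_tcR {X : Set (Fin n × Fin n)} {x y : Fin n} :
    (x, y) ∈ tcR X ↔ Relation.TransGen (fun u v : Fin n => (u, v) ∈ X) x y := Iff.rfl

lemma tcR_le {X : Set (Fin n × Fin n)} (hX : ∀ p ∈ X, p.1 ≤ p.2) :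
    ∀ {x y : Fin n}, (x, y) ∈ tcR X → x ≤ y := by
  intro x y h
  have h' := mem_tcR.mp h
  clear h
  induction h' with
  | single h1 => exact hX _ h1
  | tail h1 h2 ih => exact le_trans ih (hX _ h2)

lemma tcR_ge {X : Set (Fin n × Fin n)} (hX : ∀ p ∈ X, p.2 ≤ p.1) :
    ∀ {x y : Fin n}, (x, y) ∈ tcR X → y ≤ x := by
  intro x y h
  have h' := mem_tcR.mp h
  clear h
  induction h' with
  | single h1 => exact hX _ h1
  | tail h1 h2 ih => exact le_trans (hX _ h2) ih

lemma tcR_trans {X : Set (Fin n × Fin n)} : IsTransRel (tcR X) :=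
  fun _ _ _ h1 h2 => Relation.TransGen.trans h1 h2

lemma subset_tcR {X : Set (Fin n × Fin n)} : X ⊆ tcR X := by
  rintro ⟨x, y⟩ h
  exact Relation.TransGen.single h

lemma tcR_subset {X T : Set (Fin n × Fin n)} (hT : IsTransRel T) (h : X ⊆ T) :
    tcR X ⊆ T := by
  rintro ⟨x, y⟩ hp
  have h' := mem_tcR.mp hp
  clear hp
  induction h' with
  | single h1 => exact h h1
  | tail h1 h2 ih => exact hT _ _ _ ih (h h2)

/-- membership helpers for M = I ∪ D -/
lemma memI_of_le {I D : Set (Fin n × Fin n)} (hD1 : ∀ p ∈ D, p.2 ≤ p.1)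
    (hIr : IsReflRel I) {x y : Fin n} (h : (x, y) ∈ I ∪ D) (hxy : x ≤ y) :
    (x, y) ∈ I := by
  rcases h with h | h
  · exact h
  · have h2 : y ≤ x := hD1 _ h
    have := le_antisymm hxy h2
    subst this; exact hIr x

lemma memD_of_ge {I D : Set (Fin n × Fin n)} (hI1 : ∀ p ∈ I, p.1 ≤ p.2)
    (hDr : IsReflRel D) {x y : Fin n} (h : (x, y) ∈ I ∪ D) (hyx : y ≤ x) :
    (x, y) ∈ D := by
  rcases h with h | h
  · have h2 : x ≤ y := hI1 _ h
    have := le_antisymm h2 hyx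
    subst this; exact hDr x
  · exact h

section TDDTID
variable {I D : Set (Fin n × Fin n)}
  (hI1 : ∀ p ∈ I, p.1 ≤ p.2) (hD1 : ∀ p ∈ D, p.2 ≤ p.1)
  (hIr : IsReflRel I) (hDr : IsReflRel D)
  (hIt : IsTransRel I) (hDt : IsTransRel D)

include hI1 hD1 hIr hDr hIt hDt

lemma tdd_incSafe {x y : Fin n} (hx : (x, y) ∈ I) : (x, y) ∈ tddR (I ∪ D) := by
  refine ⟨Or.inl hx, ?_⟩
  rintro ⟨hle, i, j, hix, hyj, hiM, hM, hjM, hnij⟩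
  have hx2 : x ≤ y := hI1 _ hx
  have hxy : x = y := le_antisymm hx2 hle
  subst hxy
  exact hnij (Or.inl (hIt _ _ _ (memI_of_le hD1 hIr hiM hix) (memI_of_le hD1 hIr hjM hyj)))

lemma tdd_trans : IsTransRel (tddR (I ∪ D)) := by
  intro u v w huv hvw
  obtain ⟨huvM, huvD⟩ := huv
  obtain ⟨hvwM, hvwD⟩ := hvw
  have hrfl : ∀ a : Fin n, (a, a) ∈ I ∪ D := fun a => Or.inl (hIr a)
  have hMstep : (u, w) ∈ I ∪ D := by
    by_contra hnw
    rcases le_total u v with h1 | h1 <;> rcases le_total v w with h2 | h2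
    · exact hnw (Or.inl (hIt _ _ _ (memI_of_le hD1 hIr huvM h1)
        (memI_of_le hD1 hIr hvwM h2)))
    · exact hvwD ⟨h2, u, w, h1, le_refl w, huvM, hvwM, hrfl w, hnw⟩
    · exact huvD ⟨h1, u, w, le_refl u, h2, hrfl u, huvM, hvwM, hnw⟩
    · exact hnw (Or.inr (hDt _ _ _ (memD_of_ge hI1 hDr huvM h1)
        (memD_of_ge hI1 hDr hvwM h2)))
  refine ⟨hMstep, ?_⟩
  rintro ⟨hwu, i, j, hiu, hwj, hiM, _, hjM, hnij⟩
  have hiI : (i, u) ∈ I := memI_of_le hD1 hIr hiM hiu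
  have hjI : (w, j) ∈ I := memI_of_le hD1 hIr hjM hwj
  rcases le_total v w with hvw2 | hvw2
  · exact huvD ⟨le_trans hvw2 hwu, i, j, hiu, le_trans hvw2 hwj, hiM, huvM,
      Or.inl (hIt _ _ _ (memI_of_le hD1 hIr hvwM hvw2) hjI), hnij⟩
  · rcases le_total u v with huv2 | huv2
    · exact hvwD ⟨hvw2, i, j, le_trans hiu huv2, hwj,
        Or.inl (hIt _ _ _ hiI (memI_of_le hD1 hIr huvM huv2)), hvwM, hjM, hnij⟩
    · by_cases hiv : (i, v) ∈ I ∪ D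
      · rcases le_total i v with hivle | hivle
        · exact hvwD ⟨hvw2, i, j, hivle, hwj, hiv, hvwM, hjM, hnij⟩
        · by_cases hvj : (v, j) ∈ I ∪ D
          · rcases le_total v j with hvjle | hvjle
            · exact huvD ⟨huv2, i, j, hiu, hvjle, hiM, huvM, hvj, hnij⟩
            · exact hnij (Or.inr (hDt _ _ _ (memD_of_ge hI1 hDr hiv hivle)
                (memD_of_ge hI1 hDr hvj hvjle)))
          · exact hvwD ⟨hvw2, v, j, le_refl v, hwj, hrfl v, hvwM, hjM, hvj⟩
      · exact huvD ⟨huv2, i, v, hiu, le_refl v, hiM, huvM, hrfl v, hiv⟩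

lemma tid_decSafe {x y : Fin n} (hx : (x, y) ∈ D) : (x, y) ∈ tidR (I ∪ D) := by
  refine ⟨Or.inr hx, ?_⟩
  rintro ⟨hle, i, j, hxi, hjy, hiM, hM, hjM, hnij⟩
  have hx2 : y ≤ x := hD1 _ hx
  have hxy : x = y := le_antisymm hle hx2
  subst hxy
  exact hnij (Or.inr (hDt _ _ _ (memD_of_ge hI1 hDr hiM hxi) (memD_of_ge hI1 hDr hjM hjy)))

lemma tid_trans : IsTransRel (tidR (I ∪ D)) := by
  intro u v w huv hvw
  obtain ⟨huvM, huvD⟩ := huv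
  obtain ⟨hvwM, hvwD⟩ := hvw
  have hrfl : ∀ a : Fin n, (a, a) ∈ I ∪ D := fun a => Or.inl (hIr a)
  have hMstep : (u, w) ∈ I ∪ D := by
    by_contra hnw
    rcases le_total u v with h1 | h1 <;> rcases le_total v w with h2 | h2
    · exact hnw (Or.inl (hIt _ _ _ (memI_of_le hD1 hIr huvM h1)
        (memI_of_le hD1 hIr hvwM h2)))
    · exact huvD ⟨h1, u, w, le_refl u, h2, hrfl u, huvM, hvwM, hnw⟩
    · exact hvwD ⟨h2, u, w, h1, le_refl w, huvM, hvwM, hrfl w, hnw⟩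
    · exact hnw (Or.inr (hDt _ _ _ (memD_of_ge hI1 hDr huvM h1)
        (memD_of_ge hI1 hDr hvwM h2)))
  refine ⟨hMstep, ?_⟩
  rintro ⟨huw, i, j, hui, hjw, hiM, _, hjM, hnij⟩
  have hiD : (i, u) ∈ D := memD_of_ge hI1 hDr hiM hui
  have hjD : (w, j) ∈ D := memD_of_ge hI1 hDr hjM hjw
  rcases le_total w v with hwv2 | hwv2
  · exact huvD ⟨le_trans huw hwv2, i, j, hui, le_trans hjw hwv2, hiM, huvM,
      Or.inr (hDt _ _ _ (memD_of_ge hI1 hDr hvwM hwv2) hjD), hnij⟩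
  · rcases le_total v u with hvu2 | hvu2
    · exact hvwD ⟨hwv2, i, j, le_trans hvu2 hui, hjw,
        Or.inr (hDt _ _ _ hiD (memD_of_ge hI1 hDr huvM hvu2)), hvwM, hjM, hnij⟩
    · by_cases hvj : (v, j) ∈ I ∪ D
      · rcases le_total j v with hjvle | hjvle
        · exact huvD ⟨hvu2, i, j, hui, hjvle, hiM, huvM, hvj, hnij⟩
        · by_cases hiv : (i, v) ∈ I ∪ D
          · rcases le_total v i with hvile | hvile
            · exact hvwD ⟨hwv2, i, j, hvile, hjw, hiv, hvwM, hjM, hnij⟩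
            · exact hnij (Or.inl (hIt _ _ _ (memI_of_le hD1 hIr hiv hvile)
                (memI_of_le hD1 hIr hvj hjvle)))
          · exact huvD ⟨hvu2, i, v, hui, le_refl v, hiM, huvM, hrfl v, hiv⟩
      · exact hvwD ⟨hwv2, v, j, le_refl v, hjw, hrfl v, hvwM, hjM, hvj⟩

end TDDTID
end Aux
section MeetSide
variable {n : ℕ} {R S : Set (Fin n × Fin n)}

lemma union_inc_le : ∀ p ∈ IncR R ∪ IncR S, p.1 ≤ p.2 := by
  rintro p (hp | hp) <;> exact hp.2

lemma union_dec_ge : ∀ p ∈ DecR R ∪ DecR S, p.2 ≤ p.1 := by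
  rintro p (hp | hp) <;> exact hp.2

variable (hR : MemIWOIP R) (hS : MemIWOIP S)

lemma hI1m : ∀ p ∈ tcR (IncR R ∪ IncR S), p.1 ≤ p.2 := by
  rintro ⟨x, y⟩ hp
  exact tcR_le union_inc_le hp

lemma hD1m : ∀ p ∈ DecR R ∩ DecR S, p.2 ≤ p.1 := fun p hp => hp.1.2

include hR in
lemma hIrm : IsReflRel (tcR (IncR R ∪ IncR S)) :=
  fun a => Relation.TransGen.single (Or.inl ⟨hR.1 a, le_refl a⟩)

include hR hS in
lemma hDrm : IsReflRel (DecR R ∩ DecR S) :=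
  fun a => ⟨⟨hR.1 a, le_refl a⟩, ⟨hS.1 a, le_refl a⟩⟩

include hR hS in
lemma hDtm : IsTransRel (DecR R ∩ DecR S) := by
  intro u v w h1 h2
  exact ⟨⟨hR.2.1 _ _ _ h1.1.1 h2.1.1, le_trans h2.1.2 h1.1.2⟩,
    ⟨hS.2.1 _ _ _ h1.2.1 h2.2.1, le_trans h2.2.2 h1.2.2⟩⟩

include hR hS in
lemma meet_trans : IsTransRel (meetT R S) :=
  tdd_trans hI1m hD1m (hIrm hR) (hDrm hR hS) tcR_trans (hDtm hR hS)

include hR hS in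
lemma meet_incSafe {x y : Fin n} (hx : (x, y) ∈ tcR (IncR R ∪ IncR S)) :
    (x, y) ∈ meetT R S :=
  tdd_incSafe hI1m hD1m (hIrm hR) (hDrm hR hS) tcR_trans (hDtm hR hS) hx

include hR hS in
lemma meet_refl : IsReflRel (meetT R S) :=
  fun a => meet_incSafe hR hS (hIrm hR a)

include hR hS in
lemma meet_antisym_aux : ∀ u v : Fin n,
    Relation.TransGen (fun a b : Fin n => (a, b) ∈ IncR R ∪ IncR S) u v →
    (v, u) ∈ DecR R ∩ DecR S → (v, u) ∈ meetT R S → u = v := by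
  intro u v h
  induction h with
  | @single v h1 =>
    intro hD _
    rcases h1 with h1 | h1
    · exact hR.2.2.1 u v h1.1 hD.1.1
    · exact hS.2.2.1 u v h1.1 hD.2.1
  | @tail x v h1 h2 ih =>
    intro hD hnd
    have hux : (u, x) ∈ tcR (IncR R ∪ IncR S) := h1
    have huxle : u ≤ x := tcR_le union_inc_le hux
    have hxvle : x ≤ v := union_inc_le _ h2
    have hvx : (v, x) ∈ tcR (IncR R ∪ IncR S) ∪ (DecR R ∩ DecR S) := by
      by_contra hc
      exact hnd.2 ⟨le_trans huxle hxvle, v, x, le_refl v, huxle,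
        Or.inl (hIrm hR v), hnd.1, Or.inl hux, hc⟩
    have hvxD : (v, x) ∈ DecR R ∩ DecR S :=
      memD_of_ge hI1m (hDrm hR hS) hvx hxvle
    have hxv : x = v := by
      rcases h2 with h2 | h2
      · exact hR.2.2.1 x v h2.1 hvxD.1.1
      · exact hS.2.2.1 x v h2.1 hvxD.2.1
    subst hxv
    exact ih hD hnd

include hR hS in
lemma meet_antisym : IsAntisymRel (meetT R S) := by
  intro u v h1 h2
  rcases le_total u v with h | h
  · exact meet_antisym_aux hR hS u v (memI_of_le hD1m (hIrm hR) h1.1 h)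
      (memD_of_ge hI1m (hDrm hR hS) h2.1 h) h2
  · exact (meet_antisym_aux hR hS v u (memI_of_le hD1m (hIrm hR) h2.1 h)
      (memD_of_ge hI1m (hDrm hR hS) h1.1 h) h1).symm

include hR hS in
lemma meet_cross (b c : Fin n) : ∀ a : Fin n,
    Relation.TransGen (fun u v : Fin n => (u, v) ∈ IncR R ∪ IncR S) a c →
    a < b → b < c →
    (a, b) ∈ tcR (IncR R ∪ IncR S) ∨ (b, c) ∈ tcR (IncR R ∪ IncR S) := by
  intro a h
  induction h using Relation.TransGen.head_induction_on with
  | single h1 =>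
    intro hab hbc
    rcases h1 with h1 | h1
    · rcases hR.2.2.2 _ _ _ hab hbc h1.1 with h' | h'
      · exact Or.inl (Relation.TransGen.single (Or.inl ⟨h', le_of_lt hab⟩))
      · exact Or.inr (Relation.TransGen.single (Or.inl ⟨h', le_of_lt hbc⟩))
    · rcases hS.2.2.2 _ _ _ hab hbc h1.1 with h' | h'
      · exact Or.inl (Relation.TransGen.single (Or.inr ⟨h', le_of_lt hab⟩))
      · exact Or.inr (Relation.TransGen.single (Or.inr ⟨h', le_of_lt hbc⟩))
  | @head a x h1 h2 ih =>
    intro hab hbc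
    rcases lt_trichotomy x b with hxb | hxb | hxb
    · rcases ih hxb hbc with h' | h'
      · exact Or.inl (Relation.TransGen.head h1 h')
      · exact Or.inr h'
    · subst hxb
      exact Or.inl (Relation.TransGen.single h1)
    · rcases h1 with h1 | h1
      · rcases hR.2.2.2 _ _ _ hab hxb h1.1 with h' | h'
        · exact Or.inl (Relation.TransGen.single (Or.inl ⟨h', le_of_lt hab⟩))
        · exact Or.inr (Relation.TransGen.head (Or.inl ⟨h', le_of_lt hxb⟩) h2)
      · rcases hS.2.2.2 _ _ _ hab hxb h1.1 with h' | h'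
        · exact Or.inl (Relation.TransGen.single (Or.inr ⟨h', le_of_lt hab⟩))
        · exact Or.inr (Relation.TransGen.head (Or.inr ⟨h', le_of_lt hxb⟩) h2)

include hR hS in
lemma meet_iwoip_cond : ∀ a b c : Fin n, a < b → b < c → (a, c) ∈ meetT R S →
    (a, b) ∈ meetT R S ∨ (b, c) ∈ meetT R S := by
  intro a b c hab hbc h
  have hI : (a, c) ∈ tcR (IncR R ∪ IncR S) :=
    memI_of_le hD1m (hIrm hR) h.1 (le_of_lt (lt_trans hab hbc))
  rcases meet_cross hR hS b c a hI hab hbc with h' | h'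
  · exact Or.inl (meet_incSafe hR hS h')
  · exact Or.inr (meet_incSafe hR hS h')

include hR hS in
lemma meet_memIWOIP : MemIWOIP (meetT R S) :=
  ⟨meet_refl hR hS, meet_trans hR hS, meet_antisym hR hS, meet_iwoip_cond hR hS⟩

include hR hS in
lemma meet_wole_left : WOLE (meetT R S) R := by
  constructor
  · rintro ⟨x, y⟩ hp
    exact ⟨meet_incSafe hR hS (Relation.TransGen.single (Or.inl hp)), hp.2⟩
  · rintro ⟨x, y⟩ hp
    exact ⟨(memD_of_ge hI1m (hDrm hR hS) hp.1.1 hp.2).1.1, hp.2⟩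

include hR hS in
lemma meet_wole_right : WOLE (meetT R S) S := by
  constructor
  · rintro ⟨x, y⟩ hp
    exact ⟨meet_incSafe hR hS (Relation.TransGen.single (Or.inr hp)), hp.2⟩
  · rintro ⟨x, y⟩ hp
    exact ⟨(memD_of_ge hI1m (hDrm hR hS) hp.1.1 hp.2).2.1, hp.2⟩

/-- reflexive-transitive chains land in a reflexive transitive relation -/
lemma rtg_subset {X T : Set (Fin n × Fin n)} (hTr : IsReflRel T) (hTt : IsTransRel T)
    (hX : X ⊆ T) : ∀ {x y : Fin n},
    Relation.ReflTransGen (fun a b : Fin n => (a, b) ∈ X) x y → (x, y) ∈ T := by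
  intro x y h
  induction h with
  | refl => exact hTr x
  | tail h1 h2 ih => exact hTt _ _ _ ih (hX h2)

section MeetUniversal
variable {T : Set (Fin n × Fin n)} (hTr : IsReflRel T) (hTt : IsTransRel T)
  (hIncRT : IncR R ⊆ IncR T) (hIncST : IncR S ⊆ IncR T)
  (hDecT : ∀ p ∈ DecR T, p ∈ DecR R ∩ DecR S)

include hTt hIncRT hIncST in
lemma meet_tc_subset_T : tcR (IncR R ∪ IncR S) ⊆ T := by
  apply tcR_subset hTt
  rintro p (hp | hp)
  · exact (hIncRT hp).1
  · exact (hIncST hp).1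

include hR hS hTr hTt hIncRT hIncST hDecT in
lemma meet_Ma {b a : Fin n} (hba : (b, a) ∈ T) (hab : a ≤ b) :
    ∀ j : Fin n, Relation.ReflTransGen (fun u v : Fin n => (u, v) ∈ IncR R ∪ IncR S) a j →
    (b, j) ∈ tcR (IncR R ∪ IncR S) ∪ (DecR R ∩ DecR S) := by
  intro j h
  induction h with
  | refl => exact Or.inr (hDecT _ ⟨hba, hab⟩)
  | @tail d j h1 h2 ih =>
    rcases le_total b d with hbd | hbd
    · have hI : (b, d) ∈ tcR (IncR R ∪ IncR S) := memI_of_le hD1m (hIrm hR) ih hbd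
      exact Or.inl (Relation.TransGen.tail hI h2)
    · have hbdD := memD_of_ge hI1m (hDrm hR hS) ih hbd
      have haj : (a, j) ∈ T :=
        meet_tc_subset_T hTt hIncRT hIncST (Relation.TransGen.tail' h1 h2)
      have hbj : (b, j) ∈ T := hTt _ _ _ hba haj
      rcases h2 with h2 | h2
      · have hbjR : (b, j) ∈ R := hR.2.1 _ _ _ hbdD.1.1 h2.1
        rcases le_total b j with h' | h'
        · exact Or.inl (Relation.TransGen.single (Or.inl ⟨hbjR, h'⟩))
        · exact Or.inr (hDecT _ ⟨hbj, h'⟩)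
      · have hbjS : (b, j) ∈ S := hS.2.1 _ _ _ hbdD.2.1 h2.1
        rcases le_total b j with h' | h'
        · exact Or.inl (Relation.TransGen.single (Or.inr ⟨hbjS, h'⟩))
        · exact Or.inr (hDecT _ ⟨hbj, h'⟩)

include hR hS hTr hTt hIncRT hIncST hDecT in
lemma meet_Mb {b a j0 : Fin n} (hba : (b, a) ∈ T) (hab : a ≤ b)
    (hj0 : Relation.ReflTransGen (fun u v : Fin n => (u, v) ∈ IncR R ∪ IncR S) a j0) :
    ∀ i : Fin n, Relation.ReflTransGen (fun u v : Fin n => (u, v) ∈ IncR R ∪ IncR S) i b →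
    (i, j0) ∈ tcR (IncR R ∪ IncR S) ∪ (DecR R ∩ DecR S) := by
  have hbj0 : (b, j0) ∈ tcR (IncR R ∪ IncR S) ∪ (DecR R ∩ DecR S) :=
    meet_Ma hR hS hTr hTt hIncRT hIncST hDecT hba hab j0 hj0
  have hstepT : IncR R ∪ IncR S ⊆ T := by
    rintro p (hp | hp)
    · exact (hIncRT hp).1
    · exact (hIncST hp).1
  intro i h
  induction h using Relation.ReflTransGen.head_induction_on with
  | refl => exact hbj0
  | @head i c h1 h2 ih =>
    rcases le_total c j0 with h' | h'
    · exact Or.inl (Relation.TransGen.head h1 (memI_of_le hD1m (hIrm hR) ih h'))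
    · have hcD := memD_of_ge hI1m (hDrm hR hS) ih h'
      have hij0T : (i, j0) ∈ T := by
        have h1T : (i, c) ∈ T := hstepT h1
        have h2T : (c, b) ∈ T := rtg_subset hTr hTt hstepT h2
        have haj0T : (a, j0) ∈ T := rtg_subset hTr hTt hstepT hj0
        exact hTt _ _ _ (hTt _ _ _ (hTt _ _ _ h1T h2T) hba) haj0T
      rcases h1 with h1 | h1
      · have hij0R : (i, j0) ∈ R := hR.2.1 _ _ _ h1.1 hcD.1.1
        rcases le_total i j0 with h'' | h''
        · exact Or.inl (Relation.TransGen.single (Or.inl ⟨hij0R, h''⟩))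
        · exact Or.inr (hDecT _ ⟨hij0T, h''⟩)
      · have hij0S : (i, j0) ∈ S := hS.2.1 _ _ _ h1.1 hcD.2.1
        rcases le_total i j0 with h'' | h''
        · exact Or.inl (Relation.TransGen.single (Or.inr ⟨hij0S, h''⟩))
        · exact Or.inr (hDecT _ ⟨hij0T, h''⟩)

end MeetUniversal

include hR hS in
lemma meet_universal (T : Set (Fin n × Fin n)) (hT : MemIWOIP T)
    (hTR : WOLE T R) (hTS : WOLE T S) : WOLE T (meetT R S) := by
  have hDecT : ∀ p ∈ DecR T, p ∈ DecR R ∩ DecR S := fun p hp => ⟨hTR.2 hp, hTS.2 hp⟩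
  constructor
  · rintro ⟨x, y⟩ hp
    have hI : (x, y) ∈ tcR (IncR R ∪ IncR S) :=
      memI_of_le hD1m (hIrm hR) hp.1.1 hp.2
    exact ⟨meet_tc_subset_T hT.2.1 hTR.1 hTS.1 hI, hp.2⟩
  · rintro ⟨b, a⟩ hp
    have hD : (b, a) ∈ DecR R ∩ DecR S := hDecT _ hp
    refine ⟨⟨Or.inr hD, ?_⟩, hp.2⟩
    rintro ⟨hle, i, j, hib, haj, hiM, hM, hjM, hnij⟩
    have hiI : (i, b) ∈ tcR (IncR R ∪ IncR S) := memI_of_le hD1m (hIrm hR) hiM hib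
    have hjI : (a, j) ∈ tcR (IncR R ∪ IncR S) := memI_of_le hD1m (hIrm hR) hjM haj
    exact hnij (meet_Mb hR hS hT.1 hT.2.1 hTR.1 hTS.1 hDecT hp.1 hp.2
      (Relation.TransGen.to_reflTransGen hjI) i (Relation.TransGen.to_reflTransGen hiI))

end MeetSide
/-- The IWOIPid deletion set. -/
def NDel {n : ℕ} (J : Set (Fin n × Fin n)) : Set (Fin n × Fin n) :=
  {p | ∃ b : Fin n, NRel J p.1 b ∧ Relation.TransGen (NRel J) b p.2}

section JoinSide
variable {n : ℕ} {R S : Set (Fin n × Fin n)}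

lemma IWOIPid_eq (J : Set (Fin n × Fin n)) : IWOIPid J = J \ NDel J := rfl

lemma nrel_tg_lt {J : Set (Fin n × Fin n)} {x y : Fin n}
    (h : Relation.TransGen (NRel J) x y) : x < y := by
  induction h with
  | single h => exact h.1
  | tail h1 h2 ih => exact lt_trans ih h2.1

variable (hR : MemIWOIP R) (hS : MemIWOIP S)

lemma hI1j : ∀ p ∈ IncR R ∩ IncR S, p.1 ≤ p.2 := fun p hp => hp.1.2

lemma hD1j : ∀ p ∈ tcR (DecR R ∪ DecR S), p.2 ≤ p.1 := by
  rintro ⟨x, y⟩ hp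
  exact tcR_ge union_dec_ge hp

include hR hS in
lemma hIrj : IsReflRel (IncR R ∩ IncR S) :=
  fun a => ⟨⟨hR.1 a, le_refl a⟩, ⟨hS.1 a, le_refl a⟩⟩

include hR in
lemma hDrj : IsReflRel (tcR (DecR R ∪ DecR S)) :=
  fun a => Relation.TransGen.single (Or.inl ⟨hR.1 a, le_refl a⟩)

include hR hS in
lemma hItj : IsTransRel (IncR R ∩ IncR S) := by
  intro u v w h1 h2
  exact ⟨⟨hR.2.1 _ _ _ h1.1.1 h2.1.1, le_trans h1.1.2 h2.1.2⟩,
    ⟨hS.2.1 _ _ _ h1.2.1 h2.2.1, le_trans h1.2.2 h2.2.2⟩⟩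

include hR hS in
lemma join_trans : IsTransRel (joinT R S) :=
  tid_trans hI1j hD1j (hIrj hR hS) (hDrj hR) (hItj hR hS) tcR_trans

include hR hS in
lemma join_decSafe {x y : Fin n} (hx : (x, y) ∈ tcR (DecR R ∪ DecR S)) :
    (x, y) ∈ joinT R S :=
  tid_decSafe hI1j hD1j (hIrj hR hS) (hDrj hR) (hItj hR hS) tcR_trans hx

include hR hS in
lemma join_refl : IsReflRel (joinT R S) :=
  fun a => join_decSafe hR hS (hDrj hR a)

include hR hS in
lemma join_antisym_aux : ∀ v u : Fin n,
    Relation.TransGen (fun a b : Fin n => (a, b) ∈ DecR R ∪ DecR S) v u →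
    (u, v) ∈ IncR R ∩ IncR S → (u, v) ∈ joinT R S → u = v := by
  intro v u h
  induction h with
  | @single u h1 =>
    intro hI _
    rcases h1 with h1 | h1
    · exact hR.2.2.1 u v hI.1.1 h1.1
    · exact hS.2.2.1 u v hI.2.1 h1.1
  | @tail y u h1 h2 ih =>
    intro hI hnd
    have hvy : (v, y) ∈ tcR (DecR R ∪ DecR S) := h1
    have hyv : y ≤ v := tcR_ge union_dec_ge hvy
    have huy_le : u ≤ y := union_dec_ge _ h2
    have huy : (u, y) ∈ (IncR R ∩ IncR S) ∪ tcR (DecR R ∪ DecR S) := by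
      by_contra hc
      exact hnd.2 ⟨le_trans huy_le hyv, u, y, le_refl u, hyv,
        Or.inl (hIrj hR hS u), hnd.1, Or.inr hvy, hc⟩
    have huyI : (u, y) ∈ IncR R ∩ IncR S := memI_of_le hD1j (hIrj hR hS) huy huy_le
    have hyu : y = u := by
      rcases h2 with h2 | h2
      · exact (hR.2.2.1 u y huyI.1.1 h2.1).symm
      · exact (hS.2.2.1 u y huyI.2.1 h2.1).symm
    subst hyu
    exact ih hI hnd

include hR hS in
lemma join_antisym : IsAntisymRel (joinT R S) := by
  intro u v h1 h2
  rcases le_total u v with h | h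
  · exact join_antisym_aux hR hS v u (memD_of_ge hI1j (hDrj hR) h2.1 h)
      (memI_of_le hD1j (hIrj hR hS) h1.1 h) h1
  · exact (join_antisym_aux hR hS u v (memD_of_ge hI1j (hDrj hR) h1.1 h)
      (memI_of_le hD1j (hIrj hR hS) h2.1 h) h2).symm

/-! ### Lemmas about `IWOIPid` applied to a transitive relation -/

lemma K_refl {J : Set (Fin n × Fin n)} (hJr : IsReflRel J) : IsReflRel (IWOIPid J) := by
  intro a
  refine ⟨hJr a, ?_⟩
  rintro ⟨b, h1, h2⟩
  exact absurd (lt_trans h1.1 (nrel_tg_lt h2)) (lt_irrefl a)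

lemma K_trans_aux {J : Set (Fin n × Fin n)} (hJt : IsTransRel J) {v w : Fin n}
    (hvwJ : (v, w) ∈ J) (hvwnd : (v, w) ∉ NDel J) :
    ∀ x : Fin n, Relation.TransGen (NRel J) x w → x < v → (x, v) ∈ J →
      (x, v) ∉ NDel J → False := by
  intro x h
  induction h using Relation.TransGen.head_induction_on with
  | single h1 =>
    intro _ hxvJ _
    exact h1.2 (hJt _ _ _ hxvJ hvwJ)
  | @head x z h1 h2 ih =>
    intro hxv hxvJ hxnd
    rcases lt_trichotomy z v with hzv | hzv | hzv
    · by_cases hzvJ : (z, v) ∈ J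
      · by_cases hznd : (z, v) ∈ NDel J
        · obtain ⟨b', hzb', hb'v⟩ := hznd
          exact hxnd ⟨z, h1, Relation.TransGen.head hzb' hb'v⟩
        · exact ih hzv hzvJ hznd
      · exact hxnd ⟨z, h1, Relation.TransGen.single ⟨hzv, hzvJ⟩⟩
    · subst hzv
      exact h1.2 hxvJ
    · by_cases hvzJ : (v, z) ∈ J
      · exact h1.2 (hJt _ _ _ hxvJ hvzJ)
      · exact hvwnd ⟨z, ⟨hzv, hvzJ⟩, h2⟩

lemma K_trans {J : Set (Fin n × Fin n)} (hJt : IsTransRel J) :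
    IsTransRel (IWOIPid J) := by
  intro u v w huv hvw
  refine ⟨hJt _ _ _ huv.1 hvw.1, ?_⟩
  rintro ⟨b, hub, hbw⟩
  rcases le_or_gt v u with h | h
  · exact hvw.2 ⟨b, ⟨lt_of_le_of_lt h hub.1,
      fun hc => hub.2 (hJt _ _ _ huv.1 hc)⟩, hbw⟩
  · rcases le_or_gt w v with h2 | h2
    · obtain ⟨y, hby, hyw⟩ := Relation.TransGen.tail'_iff.mp hbw
      have hyv : NRel J y v := ⟨lt_of_lt_of_le hyw.1 h2,
        fun hc => hyw.2 (hJt _ _ _ hc hvw.1)⟩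
      exact huv.2 ⟨b, hub, Relation.TransGen.tail' hby hyv⟩
    · exact K_trans_aux hJt hvw.1 hvw.2 u (Relation.TransGen.head hub hbw) h huv.1 huv.2

lemma K_antisym {J : Set (Fin n × Fin n)} (hJa : IsAntisymRel J) :
    IsAntisymRel (IWOIPid J) :=
  fun u v h1 h2 => hJa u v h1.1 h2.1

lemma K_cond {J : Set (Fin n × Fin n)} : ∀ a b c : Fin n, a < b → b < c →
    (a, c) ∈ IWOIPid J → (a, b) ∈ IWOIPid J ∨ (b, c) ∈ IWOIPid J := by
  intro a b c hab hbc hac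
  by_cases habJ : (a, b) ∈ J
  · by_cases habd : (a, b) ∈ NDel J
    · obtain ⟨b1, h1, h2⟩ := habd
      by_cases hbcJ : (b, c) ∈ J
      · by_cases hbcd : (b, c) ∈ NDel J
        · obtain ⟨c1, h3, h4⟩ := hbcd
          exact (hac.2 ⟨b1, h1,
            Relation.TransGen.trans h2 (Relation.TransGen.head h3 h4)⟩).elim
        · exact Or.inr ⟨hbcJ, hbcd⟩
      · exact (hac.2 ⟨b1, h1, Relation.TransGen.tail h2 ⟨hbc, hbcJ⟩⟩).elim
    · exact Or.inl ⟨habJ, habd⟩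
  · by_cases hbcJ : (b, c) ∈ J
    · by_cases hbcd : (b, c) ∈ NDel J
      · obtain ⟨c1, h3, h4⟩ := hbcd
        exact (hac.2 ⟨b, ⟨hab, habJ⟩, Relation.TransGen.head h3 h4⟩).elim
      · exact Or.inr ⟨hbcJ, hbcd⟩
    · exact (hac.2 ⟨b, ⟨hab, habJ⟩, Relation.TransGen.single ⟨hbc, hbcJ⟩⟩).elim

include hR hS in
lemma K_memIWOIP : MemIWOIP (IWOIPid (joinT R S)) :=
  ⟨K_refl (join_refl hR hS), K_trans (join_trans hR hS),
    K_antisym (join_antisym hR hS), K_cond⟩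

include hR hS in
lemma join_wole_left : WOLE R (IWOIPid (joinT R S)) := by
  constructor
  · rintro ⟨x, y⟩ hp
    exact ⟨(memI_of_le hD1j (hIrj hR hS) hp.1.1.1 hp.2).1.1, hp.2⟩
  · rintro ⟨x, y⟩ hp
    refine ⟨⟨join_decSafe hR hS (Relation.TransGen.single (Or.inl hp)), ?_⟩, hp.2⟩
    rintro ⟨b, h1, h2⟩
    exact absurd hp.2 (not_le.mpr (lt_trans h1.1 (nrel_tg_lt h2)))

include hR hS in
lemma join_wole_right : WOLE S (IWOIPid (joinT R S)) := by
  constructor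
  · rintro ⟨x, y⟩ hp
    exact ⟨(memI_of_le hD1j (hIrj hR hS) hp.1.1.1 hp.2).2.1, hp.2⟩
  · rintro ⟨x, y⟩ hp
    refine ⟨⟨join_decSafe hR hS (Relation.TransGen.single (Or.inr hp)), ?_⟩, hp.2⟩
    rintro ⟨b, h1, h2⟩
    exact absurd hp.2 (not_le.mpr (lt_trans h1.1 (nrel_tg_lt h2)))

section JoinUniversal
variable {T : Set (Fin n × Fin n)} (hTr : IsReflRel T) (hTt : IsTransRel T)
  (hIncT : IncR T ⊆ IncR R ∩ IncR S)
  (hdT : DecR R ∪ DecR S ⊆ T)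

include hR hS hTr hTt hIncT hdT in
lemma join_Ja {a c : Fin n} (hac : (a, c) ∈ T) (hle : a ≤ c) :
    ∀ i : Fin n, Relation.ReflTransGen (fun u v : Fin n => (u, v) ∈ DecR R ∪ DecR S) i a →
    (i, c) ∈ (IncR R ∩ IncR S) ∪ tcR (DecR R ∪ DecR S) := by
  intro i h
  induction h using Relation.ReflTransGen.head_induction_on with
  | refl => exact Or.inl (hIncT ⟨hac, hle⟩)
  | @head i d h1 h2 ih =>
    rcases le_total c d with h' | h'
    · exact Or.inr (Relation.TransGen.head h1 (memD_of_ge hI1j (hDrj hR) ih h'))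
    · have hdcI := memI_of_le hD1j (hIrj hR hS) ih h'
      have hiaT : (i, a) ∈ T := rtg_subset hTr hTt hdT (Relation.ReflTransGen.head h1 h2)
      rcases h1 with h1 | h1
      · have hicR : (i, c) ∈ R := hR.2.1 _ _ _ h1.1 hdcI.1.1
        rcases le_total c i with h'' | h''
        · exact Or.inr (Relation.TransGen.single (Or.inl ⟨hicR, h''⟩))
        · exact Or.inl (hIncT ⟨hTt _ _ _ hiaT hac, h''⟩)
      · have hicS : (i, c) ∈ S := hS.2.1 _ _ _ h1.1 hdcI.2.1
        rcases le_total c i with h'' | h''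
        · exact Or.inr (Relation.TransGen.single (Or.inr ⟨hicS, h''⟩))
        · exact Or.inl (hIncT ⟨hTt _ _ _ hiaT hac, h''⟩)

include hR hS hTr hTt hIncT hdT in
lemma join_Jb {i a c : Fin n}
    (hia : Relation.ReflTransGen (fun u v : Fin n => (u, v) ∈ DecR R ∪ DecR S) i a)
    (hac : (a, c) ∈ T)
    (hic : (i, c) ∈ (IncR R ∩ IncR S) ∪ tcR (DecR R ∪ DecR S)) :
    ∀ j : Fin n, Relation.ReflTransGen (fun u v : Fin n => (u, v) ∈ DecR R ∪ DecR S) c j →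
    (i, j) ∈ (IncR R ∩ IncR S) ∪ tcR (DecR R ∪ DecR S) := by
  intro j h
  induction h with
  | refl => exact hic
  | @tail e j h1 h2 ih =>
    rcases le_total e i with h' | h'
    · have hie : (i, e) ∈ tcR (DecR R ∪ DecR S) := memD_of_ge hI1j (hDrj hR) ih h'
      exact Or.inr (Relation.TransGen.tail hie h2)
    · have hieI := memI_of_le hD1j (hIrj hR hS) ih h'
      have hijT : (i, j) ∈ T := by
        have hiaT : (i, a) ∈ T := rtg_subset hTr hTt hdT hia
        have hcjT : (c, j) ∈ T := rtg_subset hTr hTt hdT (Relation.ReflTransGen.tail h1 h2)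
        exact hTt _ _ _ (hTt _ _ _ hiaT hac) hcjT
      rcases h2 with h2 | h2
      · have hijR : (i, j) ∈ R := hR.2.1 _ _ _ hieI.1.1 h2.1
        rcases le_total j i with h'' | h''
        · exact Or.inr (Relation.TransGen.single (Or.inl ⟨hijR, h''⟩))
        · exact Or.inl (hIncT ⟨hijT, h''⟩)
      · have hijS : (i, j) ∈ S := hS.2.1 _ _ _ hieI.2.1 h2.1
        rcases le_total j i with h'' | h''
        · exact Or.inr (Relation.TransGen.single (Or.inr ⟨hijS, h''⟩))
        · exact Or.inl (hIncT ⟨hijT, h''⟩)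

include hR hS hTr hTt hIncT hdT in
lemma join_incT_subset_J : ∀ p ∈ IncR T, p ∈ joinT R S := by
  rintro ⟨a, c⟩ hp
  refine ⟨Or.inl (hIncT hp), ?_⟩
  rintro ⟨hle, i, j, hai, hjc, hiM, hM, hjM, hnij⟩
  have hiD : (i, a) ∈ tcR (DecR R ∪ DecR S) := memD_of_ge hI1j (hDrj hR) hiM hai
  have hjD : (c, j) ∈ tcR (DecR R ∪ DecR S) := memD_of_ge hI1j (hDrj hR) hjM hjc
  have h1 := join_Ja hR hS hTr hTt hIncT hdT hp.1 hp.2 i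
    (Relation.TransGen.to_reflTransGen hiD)
  exact hnij (join_Jb hR hS hTr hTt hIncT hdT
    (Relation.TransGen.to_reflTransGen hiD) hp.1 h1 j
    (Relation.TransGen.to_reflTransGen hjD))

end JoinUniversal

include hR hS in
lemma join_universal (T : Set (Fin n × Fin n)) (hT : MemIWOIP T)
    (hRT : WOLE R T) (hST : WOLE S T) : WOLE (IWOIPid (joinT R S)) T := by
  have hIncT : IncR T ⊆ IncR R ∩ IncR S := fun p hp => ⟨hRT.1 hp, hST.1 hp⟩
  have hdT : DecR R ∪ DecR S ⊆ T := by
    rintro p (hp | hp)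
    · exact (hRT.2 hp).1
    · exact (hST.2 hp).1
  have hJ := join_incT_subset_J hR hS hT.1 hT.2.1 hIncT hdT
  constructor
  · rintro ⟨a, c⟩ hp
    refine ⟨⟨hJ _ hp, ?_⟩, hp.2⟩
    rintro ⟨b1, h1, h2⟩
    have hlt : a < c := lt_trans h1.1 (nrel_tg_lt h2)
    have haux : ∀ z : Fin n, Relation.TransGen (NRel (joinT R S)) z c →
        (z, c) ∈ T → z < c → False := by
      intro z h
      induction h using Relation.TransGen.head_induction_on with
      | single hb =>
        intro hzT hzlt
        exact hb.2 (hJ _ ⟨hzT, le_of_lt hzlt⟩)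
      | @head z y hzy h2' ih =>
        intro hzT hzlt
        have hyc : y < c := nrel_tg_lt h2'
        rcases hT.2.2.2 z y c hzy.1 hyc hzT with h' | h'
        · exact hzy.2 (hJ _ ⟨h', le_of_lt hzy.1⟩)
        · exact ih h' hyc
    exact haux a (Relation.TransGen.head h1 h2) hp.1 hlt
  · rintro ⟨x, y⟩ hp
    have hD : (x, y) ∈ tcR (DecR R ∪ DecR S) :=
      memD_of_ge hI1j (hDrj hR) hp.1.1.1 hp.2
    exact ⟨tcR_subset hT.2.1 hdT hD, hp.2⟩

end JoinSide
/-- The subposet of the weak order induced by IWOIP(n) is a lattice: its meet is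
the meet of the lattice of posets, and its join is IWOIPid applied to the join
of the lattice of posets. -/
theorem IWOIP_lattice (n : ℕ) (R S : Set (Fin n × Fin n))
    (hR : MemIWOIP R) (hS : MemIWOIP S) :
    (MemIWOIP (meetT R S) ∧ WOLE (meetT R S) R ∧ WOLE (meetT R S) S ∧
      (∀ T : Set (Fin n × Fin n), MemIWOIP T → WOLE T R → WOLE T S →
        WOLE T (meetT R S))) ∧
    (MemIWOIP (IWOIPid (joinT R S)) ∧
      WOLE R (IWOIPid (joinT R S)) ∧ WOLE S (IWOIPid (joinT R S)) ∧
      (∀ T : Set (Fin n × Fin n), MemIWOIP T → WOLE R T → WOLE S T →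
        WOLE (IWOIPid (joinT R S)) T)) := by
  constructor
  · exact ⟨meet_memIWOIP hR hS, meet_wole_left hR hS, meet_wole_right hR hS,
      fun T hT h1 h2 => meet_universal hR hS T hT h1 h2⟩
  · exact ⟨K_memIWOIP hR hS, join_wole_left hR hS, join_wole_right hR hS,
      fun T hT h1 h2 => join_universal hR hS T hT h1 h2⟩
end
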